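/- For n ≥ 1, let A_n = P M P^n M P where P = [[1,1],[1,0]] and M = [[0,1],[1,1]]. Then A_n = [[5F_{n+1}, F_{n+1}+F_{n-1}],[F_{n+1}+F_{n-1}, F_{n-1}]], where F_j are the Fibonacci numbers (F_0 = 0, F_1 = 1). Consequently, setting α_n = 5F_{n+1} and β_n = F_{n+1}+F_{n-1}, one has β_n² ≡ (-1)^{n+1} (mod α_n). -/
import Mathlib


/-- The matrix `P = [[1,1],[1,0]]`. -/
def Pm : Matrix (Fin 2) (Fin 2) ℤ := !![1, 1; 1, 0]

/-- The matrix `M = [[0,1],[1,1]]`. -/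
def Mm : Matrix (Fin 2) (Fin 2) ℤ := !![0, 1; 1, 1]

lemma Pm_pow (m : ℕ) :
    Pm ^ (m + 1) = !![(Nat.fib (m + 2) : ℤ), (Nat.fib (m + 1) : ℤ);
      (Nat.fib (m + 1) : ℤ), (Nat.fib m : ℤ)] := by
  induction m with
  | zero => simp [Pm]
  | succ k ih =>
      rw [pow_succ, ih]
      ext i j
      fin_cases i <;> fin_cases j <;>
        simp [Pm, Matrix.mul_apply, Fin.sum_univ_two, Nat.fib_add_two] <;> ring

lemma cassini (m : ℕ) :
    (Nat.fib (m + 2) : ℤ) * Nat.fib m - (Nat.fib (m + 1) : ℤ) ^ 2 = (-1) ^ (m + 1) := by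
  induction m with
  | zero => simp
  | succ k ih =>
      have h2 : (Nat.fib (k + 3) : ℤ) = Nat.fib (k + 2) + Nat.fib (k + 1) := by
        rw [show k + 3 = (k + 1) + 2 by ring, Nat.fib_add_two]; push_cast; ring
      have h1 : (Nat.fib (k + 2) : ℤ) = Nat.fib (k + 1) + Nat.fib k := by
        rw [Nat.fib_add_two]; push_cast; ring
      rw [h2]
      linear_combination -ih - (Nat.fib (k + 2) : ℤ) * h1

/-- For `n ≥ 1`, `P M Pⁿ M P = [[5F_{n+1}, F_{n+1}+F_{n-1}],[F_{n+1}+F_{n-1}, F_{n-1}]]`,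
and consequently with `αₙ = 5F_{n+1}` and `βₙ = F_{n+1}+F_{n-1}` one has
`βₙ² ≡ (-1)^(n+1) (mod αₙ)`. -/
theorem PMPnMP_fibonacci (n : ℕ) (hn : 1 ≤ n) :
    Pm * Mm * Pm ^ n * Mm * Pm =
      !![5 * (Nat.fib (n + 1) : ℤ), (Nat.fib (n + 1) : ℤ) + (Nat.fib (n - 1) : ℤ);
         (Nat.fib (n + 1) : ℤ) + (Nat.fib (n - 1) : ℤ), (Nat.fib (n - 1) : ℤ)] ∧
    ((Nat.fib (n + 1) : ℤ) + (Nat.fib (n - 1) : ℤ)) ^ 2 ≡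
      (-1 : ℤ) ^ (n + 1) [ZMOD (5 * (Nat.fib (n + 1) : ℤ))] := by
  obtain ⟨m, rfl⟩ := Nat.exists_eq_add_of_le hn
  rw [Nat.add_comm 1 m]
  simp only [Nat.add_sub_cancel, show m + 1 + 1 = m + 2 by rfl]
  constructor
  · rw [Pm_pow]
    have h2 : (Nat.fib (m + 2) : ℤ) = Nat.fib (m + 1) + Nat.fib m := by
      rw [Nat.fib_add_two]; push_cast; ring
    ext i j
    fin_cases i <;> fin_cases j <;>
      simp [Pm, Mm, Matrix.mul_apply, Fin.sum_univ_two, h2] <;> ring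
  · have hc := cassini m
    have h2 : (Nat.fib (m + 2) : ℤ) = Nat.fib (m + 1) + Nat.fib m := by
      rw [Nat.fib_add_two]; push_cast; ring
    rw [h2] at hc
    have key : ((Nat.fib (m + 2) : ℤ) + Nat.fib m) ^ 2 - (-1) ^ (m + 2) =
        5 * (Nat.fib (m + 2) : ℤ) * Nat.fib m := by
      rw [h2]; linear_combination -hc
    exact (Int.ModEq.symm (Int.modEq_iff_dvd.mpr
      ⟨(Nat.fib m : ℤ), by linear_combination key⟩))
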